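/- arXiv:1908.04961 — 5 statements merged into one kernel-verified Lean document; each statement's English description precedes it below -/
import Mathlib

section
/- Let h ≠ 0 be real and x > 0 satisfy 2h²x³ = x − 1. Then x > 1, and h²x⁴ − x² + 2x = x²(1 − 3h²x²) = x(3 − x)/2. Consequently the value σ_c² = x²(1 − 3h²x²) of σ² for which x is a double root of P is nonnegative if and only if 1 < x ≤ 3. -/
/-- At a double-root (extremal horizon) point, i.e. a positive solution of `2h²x³ = x - 1`,
one has `x > 1`, the critical charge identity
`h²x⁴ - x² + 2x = x²(1 - 3h²x²) = x(3 - x)/2`, and nonnegativity of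
`σ_c² = x²(1 - 3h²x²)` exactly for `1 < x ≤ 3`. -/
theorem stmt9 (h x : ℝ) (hh : h ≠ 0) (hx : 0 < x)
    (heq : 2 * h ^ 2 * x ^ 3 = x - 1) :
    1 < x ∧
    h ^ 2 * x ^ 4 - x ^ 2 + 2 * x = x ^ 2 * (1 - 3 * h ^ 2 * x ^ 2) ∧
    h ^ 2 * x ^ 4 - x ^ 2 + 2 * x = x * (3 - x) / 2 ∧
    (0 ≤ x ^ 2 * (1 - 3 * h ^ 2 * x ^ 2) ↔ (1 < x ∧ x ≤ 3)) := by
  have hh2 : 0 < h ^ 2 := pow_pos (abs_pos.mpr hh) 2 |>.trans_eq (by rw [sq_abs])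
  have hx1 : 1 < x := by nlinarith [pow_pos hx 3]
  have h4 : 2 * h ^ 2 * x ^ 4 = x * (x - 1) := by nlinarith [heq]
  refine ⟨hx1, by nlinarith, by nlinarith, ?_⟩
  constructor
  · intro hnn
    refine ⟨hx1, ?_⟩
    nlinarith [sq_nonneg x]
  · rintro ⟨h1, h3⟩
    nlinarith [sq_nonneg x]
end

section
/- Let h > 0 and 0 < σ² < 1, and set x_{s−} = 1 − √(1 − σ²) and x_{s+} = 1 + √(1 − σ²). Then P(x) = h²x⁴ − x² + 2x − σ² has at least one root in the open interval (0, x_{s−}), and P(x) > 0 for every x in the closed interval [x_{s−}, x_{s+}]; consequently every positive root of P other than those in (0, x_{s−}) lies in (x_{s+}, ∞). -/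
/-- Undercharged case `0 < σ² < 1`: the horizon polynomial `P(x) = h²x⁴ - x² + 2x - σ²`
has a root below the inner singular radius `x_{s-} = 1 - √(1 - σ²)`, is positive on the
singular band `[x_{s-}, x_{s+}]` with `x_{s+} = 1 + √(1 - σ²)`, and all other positive
roots lie beyond `x_{s+}`. -/
theorem stmt12 (h σ : ℝ) (hh : 0 < h) (hσ0 : 0 < σ ^ 2) (hσ1 : σ ^ 2 < 1)
    (xsm xsp : ℝ)
    (hxsm : xsm = 1 - Real.sqrt (1 - σ ^ 2))
    (hxsp : xsp = 1 + Real.sqrt (1 - σ ^ 2))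
    (P : ℝ → ℝ) (hP : ∀ x, P x = h ^ 2 * x ^ 4 - x ^ 2 + 2 * x - σ ^ 2) :
    (∃ x ∈ Set.Ioo 0 xsm, P x = 0) ∧
    (∀ x ∈ Set.Icc xsm xsp, 0 < P x) ∧
    (∀ x : ℝ, 0 < x → P x = 0 → x ∉ Set.Ioo (0 : ℝ) xsm → xsp < x) := by
  set s := Real.sqrt (1 - σ ^ 2) with hs
  have h1σ : (0:ℝ) < 1 - σ ^ 2 := by linarith
  have hs2 : s ^ 2 = 1 - σ ^ 2 := Real.sq_sqrt h1σ.le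
  have hspos : 0 < s := Real.sqrt_pos.mpr h1σ
  have hs1 : s < 1 := by nlinarith [hs2, hspos]
  have hxsmpos : 0 < xsm := by rw [hxsm]; linarith
  -- positivity on the band
  have hband : ∀ x ∈ Set.Icc xsm xsp, 0 < P x := by
    intro x hx
    obtain ⟨hx1, hx2⟩ := hx
    have hxpos : 0 < x := lt_of_lt_of_le hxsmpos hx1
    have hquad : 0 ≤ -x ^ 2 + 2 * x - σ ^ 2 := by
      have : (x - xsm) * (xsp - x) ≥ 0 := mul_nonneg (by linarith) (by linarith)
      have hexp : (x - xsm) * (xsp - x) = -x ^ 2 + 2 * x - σ ^ 2 := by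
        rw [hxsm, hxsp]; ring_nf; nlinarith [hs2]
      linarith [hexp ▸ this]
    rw [hP]
    nlinarith [pow_pos hxpos 4, pow_pos hh 2, mul_pos (pow_pos hh 2) (pow_pos hxpos 4)]
  refine ⟨?_, hband, ?_⟩
  · -- root in (0, xsm) by IVT
    have hP0 : P 0 < 0 := by rw [hP]; nlinarith
    have hPxsm : 0 < P xsm := hband xsm ⟨le_refl _, by rw [hxsm, hxsp]; linarith⟩
    have hcont : ContinuousOn P (Set.Icc 0 xsm) := by
      have : Continuous P := by
        have : P = fun x => h ^ 2 * x ^ 4 - x ^ 2 + 2 * x - σ ^ 2 := funext hP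
        rw [this]; continuity
      exact this.continuousOn
    have := intermediate_value_Ioo hxsmpos.le hcont (Set.mem_Ioo.mpr ⟨hP0, hPxsm⟩)
    obtain ⟨x, hx, hPx⟩ := this
    exact ⟨x, hx, hPx⟩
  · intro x hx0 hPx hnot
    by_contra hle
    push_neg at hle
    have hxge : xsm ≤ x := by
      by_contra hlt
      push_neg at hlt
      exact hnot ⟨hx0, hlt⟩
    have := hband x ⟨hxge, hle⟩
    linarith
end

section
/- Let m > 0, q real, and N(R) = √(1 − 2m/R + q²/R²), with derivative N′(R) = (m/R² − q²/R³)/N(R) wherever 1 − 2m/R + q²/R² > 0. Let I be a real interval and H, R₋ : I → ℝ be differentiable with R₋(t) > 0 and 1 − 2m/R₋(t) + q²/R₋(t)² > 0 for all t ∈ I, satisfying the horizon equation R₋(t)·H(t) = N(R₋(t)) on I. If H′(t) < 0 and H(t) < N′(R₋(t)) for all t ∈ I, then R₋′(t) = −R₋(t)·H′(t)/(H(t) − N′(R₋(t))) and R₋′(t) < 0 for all t ∈ I; i.e. the inner apparent horizon radius is strictly decreasing in time. -/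
/-- The inner apparent horizon of the Shah–Vaidya spacetime is strictly decreasing:
if `R₋(t)·H(t) = N(R₋(t))` on an interval `I`, with `H' < 0` (null energy condition)
and `H < N'(R₋)` on `I`, then `R₋' = -R₋·H'/(H - N'(R₋)) < 0` on `I`. -/
theorem stmt13 (m q : ℝ) (hm : 0 < m)
    (N N' : ℝ → ℝ)
    (hN : ∀ R, N R = Real.sqrt (1 - 2 * m / R + q ^ 2 / R ^ 2))
    (hN' : ∀ R, N' R = (m / R ^ 2 - q ^ 2 / R ^ 3) / N R)
    (I : Set ℝ) (hI : I.OrdConnected) (hInontriv : ∃ a ∈ I, ∃ b ∈ I, a < b)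
    (H Rm H' Rm' : ℝ → ℝ)
    (hHd : ∀ t ∈ I, HasDerivAt H (H' t) t)
    (hRmd : ∀ t ∈ I, HasDerivAt Rm (Rm' t) t)
    (hRmpos : ∀ t ∈ I, 0 < Rm t)
    (hlapse : ∀ t ∈ I, 0 < 1 - 2 * m / Rm t + q ^ 2 / (Rm t) ^ 2)
    (hhor : ∀ t ∈ I, Rm t * H t = N (Rm t))
    (hH' : ∀ t ∈ I, H' t < 0)
    (hHlt : ∀ t ∈ I, H t < N' (Rm t)) :
    ∀ t ∈ I, Rm' t = -(Rm t) * H' t / (H t - N' (Rm t)) ∧ Rm' t < 0 := by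
  intro t ht
  set R := Rm t with hR
  have hRpos : 0 < R := hRmpos t ht
  have hR0 : R ≠ 0 := ne_of_gt hRpos
  have hg : 0 < 1 - 2 * m / R + q ^ 2 / R ^ 2 := hlapse t ht
  have hNpos : 0 < N R := by rw [hN R]; exact Real.sqrt_pos.mpr hg
  -- derivative of the lapse argument
  have hgd : HasDerivAt (fun r : ℝ => 1 - 2 * m / r + q ^ 2 / r ^ 2)
      (2 * m / R ^ 2 - 2 * q ^ 2 / R ^ 3) R := by
    have h1 : HasDerivAt (fun r : ℝ => r⁻¹) (-(R ^ 2)⁻¹) R := hasDerivAt_inv hR0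
    have h2 : HasDerivAt (fun r : ℝ => r ^ 2) (2 * R) R := by
      simpa using hasDerivAt_pow 2 R
    have h3 : HasDerivAt (fun r : ℝ => (r ^ 2)⁻¹) (-(2 * R) / (R ^ 2) ^ 2) R :=
      h2.inv (pow_ne_zero 2 hR0)
    have h4 : HasDerivAt (fun r : ℝ => 1 - 2 * m * r⁻¹ + q ^ 2 * (r ^ 2)⁻¹)
        (0 - 2 * m * (-(R ^ 2)⁻¹) + q ^ 2 * (-(2 * R) / (R ^ 2) ^ 2)) R := by
      exact ((hasDerivAt_const R (1:ℝ)).sub ((h1.const_mul (2*m)))).add (h3.const_mul (q^2))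
    have heq : (fun r : ℝ => 1 - 2 * m / r + q ^ 2 / r ^ 2)
        = fun r : ℝ => 1 - 2 * m * r⁻¹ + q ^ 2 * (r ^ 2)⁻¹ := by
      funext r; rw [div_eq_mul_inv, div_eq_mul_inv]
    rw [heq]
    convert h4 using 1
    field_simp
    ring
  -- derivative of N at R
  have hNd : HasDerivAt N (N' R) R := by
    have hNe : N = fun r => Real.sqrt (1 - 2 * m / r + q ^ 2 / r ^ 2) := funext hN
    have := hgd.sqrt (ne_of_gt hg)
    rw [← hN R] at this
    rw [hNe, hN' R]
    convert this using 1
    rw [hN R] at hNpos ⊢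
    field_simp
  have hcomp : HasDerivAt (fun s => N (Rm s)) (N' R * Rm' t) t :=
    hNd.comp t (hRmd t ht)
  have hprod : HasDerivAt (fun s => Rm s * H s) (Rm' t * H t + R * H' t) t :=
    (hRmd t ht).mul (hHd t ht)
  have hD : HasDerivAt (fun s => Rm s * H s - N (Rm s))
      (Rm' t * H t + R * H' t - N' R * Rm' t) t := hprod.sub hcomp
  -- the difference vanishes on I, so its derivative at t vanishes
  have hkey : Rm' t * H t + R * H' t - N' R * Rm' t = 0 := by
    obtain ⟨a, ha, b, hb, hab⟩ := hInontriv
    have main : ∀ c : ℝ, c ∈ I → t ≠ c →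
        Rm' t * H t + R * H' t - N' R * Rm' t = 0 := by
      intro c hc htc
      rcases htc.lt_or_gt with hlt | hlt
      · have hsub : Set.Icc t c ⊆ I := hI.out ht hc
        have hud : UniqueDiffWithinAt ℝ (Set.Icc t c) t :=
          (uniqueDiffOn_Icc hlt) t ⟨le_refl t, le_of_lt hlt⟩
        have h1 : HasDerivWithinAt (fun s => Rm s * H s - N (Rm s))
            (Rm' t * H t + R * H' t - N' R * Rm' t) (Set.Icc t c) t :=
          hD.hasDerivWithinAt
        have h2 : HasDerivWithinAt (fun s => Rm s * H s - N (Rm s)) 0 (Set.Icc t c) t := by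
          refine (hasDerivWithinAt_const t (Set.Icc t c) (0:ℝ)).congr ?_ ?_
          · intro y hy; rw [hhor y (hsub hy)]; ring
          · rw [hhor t ht]; ring
        exact hud.eq_deriv _ h1 h2
      · have hsub : Set.Icc c t ⊆ I := hI.out hc ht
        have hud : UniqueDiffWithinAt ℝ (Set.Icc c t) t :=
          (uniqueDiffOn_Icc hlt) t ⟨le_of_lt hlt, le_refl t⟩
        have h1 : HasDerivWithinAt (fun s => Rm s * H s - N (Rm s))
            (Rm' t * H t + R * H' t - N' R * Rm' t) (Set.Icc c t) t :=
          hD.hasDerivWithinAt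
        have h2 : HasDerivWithinAt (fun s => Rm s * H s - N (Rm s)) 0 (Set.Icc c t) t := by
          refine (hasDerivWithinAt_const t (Set.Icc c t) (0:ℝ)).congr ?_ ?_
          · intro y hy; rw [hhor y (hsub hy)]; ring
          · rw [hhor t ht]; ring
        exact hud.eq_deriv _ h1 h2
    by_cases h : t = a
    · exact main b hb (h ▸ ne_of_lt hab)
    · exact main a ha (Ne.symm (fun h' => h h'.symm))
  have hdenne : H t - N' R < 0 := sub_neg.mpr (hHlt t ht)
  have hval : Rm' t = -R * H' t / (H t - N' R) := by
    rw [eq_div_iff (ne_of_lt hdenne)]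
    linear_combination hkey
  refine ⟨hval, ?_⟩
  rw [hval]
  apply div_neg_of_pos_of_neg _ hdenne
  have := hH' t ht
  nlinarith
end

section
/- Let μ ≠ 0 be real, I ⊆ ℝ an interval, and V : I → ℝ differentiable with V(φ) > 0 and (V′(φ))² = 3μ⁴·V(φ) for all φ ∈ I. Then there exists a constant c ∈ ℝ such that V(φ) = (3μ⁴/4)·(φ − c)² for all φ ∈ I. -/
lemma const_of_deriv_zero {I : Set ℝ} (hI : I.OrdConnected) {g : ℝ → ℝ}
    (h : ∀ φ ∈ I, HasDerivAt g 0 φ) {x y : ℝ} (hx : x ∈ I) (hy : y ∈ I) :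
    g x = g y := by
  wlog hxy : x ≤ y generalizing x y
  · exact (this hy hx (le_of_not_ge hxy)).symm
  have hsub : Set.Icc x y ⊆ I := hI.out hx hy
  have := constant_of_has_deriv_right_zero
    (f := g) (a := x) (b := y)
    (fun z hz => ((h z (hsub hz)).continuousAt).continuousWithinAt)
    (fun z hz => ((h z (hsub (Set.Ico_subset_Icc_self hz))).hasDerivWithinAt))
  exact (this y (Set.right_mem_Icc.2 hxy)).symm

/-- The cuscuton potential equation: any positive differentiable solution of
`(V')² = 3μ⁴V` on an interval is of the form `V(φ) = (3μ⁴/4)(φ - c)²`. -/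
theorem stmt15 (μ : ℝ) (hμ : μ ≠ 0) (I : Set ℝ) (hI : I.OrdConnected)
    (V V' : ℝ → ℝ)
    (hd : ∀ φ ∈ I, HasDerivAt V (V' φ) φ)
    (hpos : ∀ φ ∈ I, 0 < V φ)
    (hode : ∀ φ ∈ I, (V' φ) ^ 2 = 3 * μ ^ 4 * V φ) :
    ∃ c : ℝ, ∀ φ ∈ I, V φ = 3 * μ ^ 4 / 4 * (φ - c) ^ 2 := by
  rcases Set.eq_empty_or_nonempty I with rfl | ⟨φ₀, hφ₀⟩
  · exact ⟨0, by simp⟩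
  set a : ℝ := Real.sqrt 3 * μ ^ 2 / 2 with ha_def
  have ha : 0 < a := by
    apply div_pos (mul_pos (Real.sqrt_pos.2 (by norm_num)) (by positivity)) two_pos
  have ha2 : a ^ 2 = 3 * μ ^ 4 / 4 := by
    have h3 : Real.sqrt 3 ^ 2 = 3 := Real.sq_sqrt (by norm_num)
    rw [ha_def]; ring_nf; rw [h3]; ring
  set W : ℝ → ℝ := fun φ => Real.sqrt (V φ) with hW_def
  set W' : ℝ → ℝ := fun φ => V' φ / (2 * Real.sqrt (V φ)) with hW'_def
  have hWd : ∀ φ ∈ I, HasDerivAt W (W' φ) φ := fun φ hφ =>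
    (hd φ hφ).sqrt (ne_of_gt (hpos φ hφ))
  have hWsq : ∀ φ ∈ I, (W' φ) ^ 2 = a ^ 2 := by
    intro φ hφ
    have hVpos := hpos φ hφ
    have hs : Real.sqrt (V φ) ^ 2 = V φ := Real.sq_sqrt hVpos.le
    have heq : (W' φ) ^ 2 = V' φ ^ 2 / (4 * V φ) := by
      show (V' φ / (2 * Real.sqrt (V φ))) ^ 2 = _
      rw [div_pow, mul_pow, hs]; norm_num
    rw [heq, hode φ hφ, ha2]
    field_simp
  have hW'val : ∀ φ ∈ I, W' φ = a ∨ W' φ = -a := by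
    intro φ hφ
    have h2 : (W' φ - a) * (W' φ + a) = 0 := by linear_combination hWsq φ hφ
    rcases mul_eq_zero.1 h2 with h | h
    · exact Or.inl (by linarith)
    · exact Or.inr (by linarith)
  -- Darboux: W' has constant sign
  have hdarb : (W' '' I).OrdConnected :=
    hI.image_hasDerivWithinAt (fun φ hφ => (hWd φ hφ).hasDerivWithinAt)
  have hconst : (∀ φ ∈ I, W' φ = a) ∨ (∀ φ ∈ I, W' φ = -a) := by
    rcases hW'val φ₀ hφ₀ with h0 | h0
    · left; intro φ hφ
      rcases hW'val φ hφ with h | h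
      · exact h
      · exfalso
        have h01 : (0:ℝ) ∈ W' '' I := by
          have : (0:ℝ) ∈ Set.Icc (W' φ) (W' φ₀) := by
            constructor <;> [linarith; linarith]
          exact hdarb.out ⟨φ, hφ, rfl⟩ ⟨φ₀, hφ₀, rfl⟩ this
        obtain ⟨ψ, hψ, hψ0⟩ := h01
        have := hWsq ψ hψ
        rw [hψ0] at this
        nlinarith
    · right; intro φ hφ
      rcases hW'val φ hφ with h | h
      · exfalso
        have h01 : (0:ℝ) ∈ W' '' I := by
          have : (0:ℝ) ∈ Set.Icc (W' φ₀) (W' φ) := by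
            constructor <;> [linarith; linarith]
          exact hdarb.out ⟨φ₀, hφ₀, rfl⟩ ⟨φ, hφ, rfl⟩ this
        obtain ⟨ψ, hψ, hψ0⟩ := h01
        have := hWsq ψ hψ
        rw [hψ0] at this
        nlinarith
      · exact h
  have key : ∀ (ε : ℝ), ε ^ 2 = 1 → (∀ φ ∈ I, W' φ = ε * a) →
      ∃ c : ℝ, ∀ φ ∈ I, V φ = 3 * μ ^ 4 / 4 * (φ - c) ^ 2 := by
    intro ε hε2 hε
    set g : ℝ → ℝ := fun φ => W φ - ε * a * φ with hg_def
    have hg : ∀ φ ∈ I, HasDerivAt g 0 φ := by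
      intro φ hφ
      have := (hWd φ hφ).sub ((hasDerivAt_id φ).const_mul (ε * a))
      simp [hε φ hφ, mul_one] at this
      exact this
    refine ⟨-ε * g φ₀ / a, ?_⟩
    intro φ hφ
    have hgconst : g φ = g φ₀ := const_of_deriv_zero hI hg hφ hφ₀
    have hWφ : W φ = ε * a * φ + g φ₀ := by
      have : g φ = W φ - ε * a * φ := rfl
      linarith [hgconst, this]
    have hVW : V φ = (W φ) ^ 2 := (Real.sq_sqrt (hpos φ hφ).le).symm
    rw [hVW, hWφ, ← ha2]
    have hane : a ≠ 0 := ne_of_gt ha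
    field_simp
    linear_combination (a ^ 2 * φ ^ 2 - (g φ₀) ^ 2) * hε2
  rcases hconst with h | h
  · exact key 1 (by norm_num) (fun φ hφ => by rw [h φ hφ]; ring)
  · exact key (-1) (by norm_num) (fun φ hφ => by rw [h φ hφ]; ring)
end

section
/- Let a > 0, r > 0 and m, q ∈ ℝ, and suppose u(r) = a + m/r + (m² − q²)/(4ar²) > 0. Then, with primes denoting d/dr, the identity u″(r) − 2(u′(r))²/u(r) − u′(r)/r + 2q²/(u(r)·r⁴) = 3m/r³ holds. Equivalently, λ(r) = log u(r) satisfies e^{λ}[λ″ − (λ′)² − λ′/r + 2q²e^{−2λ}/r⁴] = 3m/r³. -/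
lemma sv_deriv (a m q : ℝ) (ha : a ≠ 0)
    (u : ℝ → ℝ) (hu : ∀ x, u x = a + m / x + (m ^ 2 - q ^ 2) / (4 * a * x ^ 2))
    (x : ℝ) (hx : x ≠ 0) :
    HasDerivAt u (-m / x ^ 2 - (m ^ 2 - q ^ 2) / (2 * a * x ^ 3)) x := by
  have h : HasDerivAt (fun x : ℝ => a + m / x + (m ^ 2 - q ^ 2) / (4 * a * x ^ 2))
      (-m / x ^ 2 - (m ^ 2 - q ^ 2) / (2 * a * x ^ 3)) x := by
    have h1 : HasDerivAt (fun x : ℝ => m / x)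
        ((0 * x - m * 1) / x ^ 2) x :=
      (hasDerivAt_const x m).div (hasDerivAt_id x) hx
    have h2 : HasDerivAt (fun x : ℝ => 4 * a * x ^ 2) (4 * a * (2 * x)) x := by
      simpa using (hasDerivAt_pow 2 x).const_mul (4 * a)
    have h2' : HasDerivAt (fun x : ℝ => (m ^ 2 - q ^ 2) / (4 * a * x ^ 2))
        ((0 * (4 * a * x ^ 2) - (m ^ 2 - q ^ 2) * (4 * a * (2 * x))) / (4 * a * x ^ 2) ^ 2) x :=
      (hasDerivAt_const x (m ^ 2 - q ^ 2)).div h2 (by positivity)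
    have := (h1.const_add a).add h2'
    refine this.congr_deriv ?_
    field_simp
    ring
  exact h.congr_of_eventuallyEq (Filter.Eventually.of_forall fun y => (hu y))

/-- The Shah–Vaidya spatial profile `u(r) = a + m/r + (m² - q²)/(4ar²)` satisfies the
reduced pressure-isotropy equation
`u'' - 2u'²/u - u'/r + 2q²/(u r⁴) = 3m/r³` at every `r > 0` where `u(r) > 0`. -/
theorem stmt18 (a m q : ℝ) (ha : 0 < a) (r : ℝ) (hr : 0 < r)
    (u : ℝ → ℝ) (hu : ∀ x, u x = a + m / x + (m ^ 2 - q ^ 2) / (4 * a * x ^ 2))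
    (hupos : 0 < u r) :
    deriv (deriv u) r - 2 * (deriv u r) ^ 2 / u r - deriv u r / r
      + 2 * q ^ 2 / (u r * r ^ 4) = 3 * m / r ^ 3 := by
  have ha' : a ≠ 0 := ne_of_gt ha
  have hr' : r ≠ 0 := ne_of_gt hr
  have hU0 : u r ≠ 0 := ne_of_gt hupos
  have hd1 : deriv u r = -m / r ^ 2 - (m ^ 2 - q ^ 2) / (2 * a * r ^ 3) :=
    (sv_deriv a m q ha' u hu r hr').deriv
  have heq : deriv u =ᶠ[nhds r]
      (fun x => -m / x ^ 2 - (m ^ 2 - q ^ 2) / (2 * a * x ^ 3)) := by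
    filter_upwards [eventually_ne_nhds hr'] with x hx
    exact (sv_deriv a m q ha' u hu x hx).deriv
  have hd2 : deriv (deriv u) r = 2 * m / r ^ 3 + 3 * (m ^ 2 - q ^ 2) / (2 * a * r ^ 4) := by
    rw [heq.deriv_eq]
    have h1 : HasDerivAt (fun x : ℝ => -m / x ^ 2)
        ((0 * r ^ 2 - -m * (↑2 * r ^ (2 - 1))) / (r ^ 2) ^ 2) r :=
      (hasDerivAt_const r (-m)).div (hasDerivAt_pow 2 r) (by positivity)
    have h3 : HasDerivAt (fun x : ℝ => 2 * a * x ^ 3) (2 * a * (3 * r ^ 2)) r := by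
      simpa using (hasDerivAt_pow 3 r).const_mul (2 * a)
    have h2 : HasDerivAt (fun x : ℝ => (m ^ 2 - q ^ 2) / (2 * a * x ^ 3))
        ((0 * (2 * a * r ^ 3) - (m ^ 2 - q ^ 2) * (2 * a * (3 * r ^ 2))) / (2 * a * r ^ 3) ^ 2) r :=
      (hasDerivAt_const r (m ^ 2 - q ^ 2)).div h3 (by positivity)
    rw [show deriv (fun x : ℝ => -m / x ^ 2 - (m ^ 2 - q ^ 2) / (2 * a * x ^ 3)) r = _ from (h1.sub h2).deriv]
    field_simp
    ring
  have hUr : u r = a + m / r + (m ^ 2 - q ^ 2) / (4 * a * r ^ 2) := hu r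
  rw [hd1, hd2]
  set d : ℝ := -m / r ^ 2 - (m ^ 2 - q ^ 2) / (2 * a * r ^ 3) with hd
  set D : ℝ := 2 * m / r ^ 3 + 3 * (m ^ 2 - q ^ 2) / (2 * a * r ^ 4) with hD
  have hsplit : 2 * d ^ 2 / u r - 2 * q ^ 2 / (u r * r ^ 4)
      = (2 * d ^ 2 - 2 * q ^ 2 / r ^ 4) / u r := by
    field_simp
  have key : 2 * d ^ 2 - 2 * q ^ 2 / r ^ 4 = (D - d / r - 3 * m / r ^ 3) * u r := by
    rw [hUr, hd, hD]
    field_simp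
    ring
  have : D - 2 * d ^ 2 / u r - d / r + 2 * q ^ 2 / (u r * r ^ 4)
      = D - d / r - (2 * d ^ 2 - 2 * q ^ 2 / r ^ 4) / u r := by
    rw [← hsplit]; ring
  rw [this, key, mul_div_assoc, div_self hU0]
  ring
end
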